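/- Let D ⊆ ℝ^l be an unbounded open convex set. Then exactly one of the following holds: (1) for every R > 0, the set D \ closedBall(0,R) has exactly one unbounded connected component; (2) there exists R₀ > 0 such that for every R ≥ R₀ the set D \ closedBall(0,R) has exactly two unbounded connected components. Moreover, alternative (2) holds if and only if there is a unit vector v ∈ ℝ^l with S_∞(D) = {v, −v}. -/

import Mathlib

open Set Metric Filter RealInnerProductSpace

/-- The set of directions at infinity of `D ⊆ ℝ^l`: unit vectors `v` such that some ray
`x + ℝ≥0 • v` starting in `D` stays in `D`. -/
def directionsAtInfinity (l : ℕ) (D : Set (EuclideanSpace ℝ (Fin l))) :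
    Set (EuclideanSpace ℝ (Fin l)) :=
  {v | ‖v‖ = 1 ∧ ∃ x ∈ D, ∀ t : ℝ, 0 ≤ t → x + t • v ∈ D}

/-- The collection of unbounded connected components of a set `S ⊆ ℝ^l`. -/
def unboundedComponents (l : ℕ) (S : Set (EuclideanSpace ℝ (Fin l))) :
    Set (Set (EuclideanSpace ℝ (Fin l))) :=
  {C | (∃ x ∈ S, C = connectedComponentIn S x) ∧ ¬ Bornology.IsBounded C}

noncomputable section AuxPriv

variable {l : ℕ} {D : Set (EuclideanSpace ℝ (Fin l))}

private lemma le_of_sq_le_sq' {a b : ℝ} (hb : 0 ≤ b) (h : a^2 ≤ b^2) : a ≤ b := by nlinarith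

private lemma lt_of_sq_lt_sq'' {a b : ℝ} (hb : 0 ≤ b) (h : a^2 < b^2) : a < b := by nlinarith

/-- Lower bound `T - ‖c‖ ≤ ‖c + T•u‖` for a unit vector `u`. -/
private lemma norm_add_smul_ge {c u : EuclideanSpace ℝ (Fin l)} (hu : ‖u‖ = 1) {T : ℝ}
    (hT : 0 ≤ T) : T - ‖c‖ ≤ ‖c + T • u‖ := by
  have h1 : ‖T • u‖ = T := by rw [norm_smul, hu, Real.norm_eq_abs, abs_of_nonneg hT, mul_one]
  have h2 : ‖T • u‖ ≤ ‖c + T • u‖ + ‖c‖ := by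
    calc ‖T • u‖ = ‖(c + T • u) - c‖ := by rw [add_sub_cancel_left]
      _ ≤ ‖c + T • u‖ + ‖c‖ := norm_sub_le _ _
  linarith

/-- If the ray from `z` has nonnegative inner product with unit `u`, norms don't decrease. -/
private lemma norm_ray_ge {z u : EuclideanSpace ℝ (Fin l)} (hu : ‖u‖ = 1)
    (hzu : 0 ≤ ⟪z, u⟫) {t : ℝ} (ht : 0 ≤ t) : ‖z‖ ≤ ‖z + t • u‖ := by
  apply le_of_sq_le_sq' (norm_nonneg _)
  rw [norm_add_sq_real, real_inner_smul_right, norm_smul, Real.norm_eq_abs,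
    abs_of_nonneg ht, hu, mul_one]
  nlinarith

private lemma aux_ray_closure (hconv : Convex ℝ D) {x₁ u : EuclideanSpace ℝ (Fin l)}
    (hx₁ : x₁ ∈ D) (hray : ∀ t : ℝ, 0 ≤ t → x₁ + t • u ∈ D)
    {x : EuclideanSpace ℝ (Fin l)} (hx : x ∈ D) {t : ℝ} (ht : 0 ≤ t) :
    x + t • u ∈ closure D := by
  have key : ∀ n : ℕ, x + ((n:ℝ)+1)⁻¹ • (x₁ - x) + t • u ∈ D := by
    intro n
    have hn : (0:ℝ) < (n:ℝ)+1 := by positivity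
    have hmem : x₁ + (((n:ℝ)+1) * t) • u ∈ D := hray _ (by positivity)
    have := hconv hx hmem (a := 1 - ((n:ℝ)+1)⁻¹) (b := ((n:ℝ)+1)⁻¹)
      (by rw [sub_nonneg]; exact inv_le_one_of_one_le₀ (by linarith)) (by positivity) (by ring)
    convert this using 1
    have hne : ((n:ℝ)+1) ≠ 0 := ne_of_gt hn
    match_scalars <;> field_simp <;> ring
  have h0 : Tendsto (fun n : ℕ => ((n:ℝ)+1)⁻¹) atTop (nhds 0) := by
    apply Tendsto.inv_tendsto_atTop
    exact tendsto_atTop_add_const_right _ _ tendsto_natCast_atTop_atTop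
  have htend : Tendsto (fun n : ℕ => x + ((n:ℝ)+1)⁻¹ • (x₁ - x) + t • u) atTop
      (nhds (x + t • u)) := by
    have := ((h0.smul_const (x₁ - x)).const_add x).add_const (t • u)
    simpa using this
  exact mem_closure_of_tendsto htend (Eventually.of_forall key)

private lemma aux_ray_mem (hopen : IsOpen D) (hconv : Convex ℝ D)
    {x u : EuclideanSpace ℝ (Fin l)} (hx : x ∈ D)
    (hcl : ∀ s : ℝ, 0 ≤ s → x + s • u ∈ closure D) {t : ℝ} (ht : 0 ≤ t) : x + t • u ∈ D := by
  have hxi : x ∈ interior D := by rwa [hopen.interior_eq]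
  have h2 : x + (2*t) • u ∈ closure D := hcl _ (by linarith)
  have := hconv.combo_interior_closure_mem_interior hxi h2 (a := 1/2) (b := 1/2)
    (by norm_num) (by norm_num) (by norm_num)
  rw [hopen.interior_eq] at this
  convert this using 1
  module

private lemma dir_ray (hopen : IsOpen D) (hconv : Convex ℝ D)
    {u : EuclideanSpace ℝ (Fin l)} (hu : u ∈ directionsAtInfinity l D)
    {x : EuclideanSpace ℝ (Fin l)} (hx : x ∈ D) {t : ℝ} (ht : 0 ≤ t) : x + t • u ∈ D := by
  obtain ⟨hnu, x₁, hx₁, hray⟩ := hu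
  exact aux_ray_mem hopen hconv hx
    (fun s hs => aux_ray_closure hconv hx₁ hray hx hs) ht

/-- From a sequence in `D` with norms tending to infinity, extract a direction at infinity. -/
private lemma seq_dir (hopen : IsOpen D) (hconv : Convex ℝ D)
    {x₀ : EuclideanSpace ℝ (Fin l)} (hx₀ : x₀ ∈ D) (z : ℕ → EuclideanSpace ℝ (Fin l))
    (hz : ∀ n, z n ∈ D) (hnorm : ∀ n : ℕ, (n:ℝ) + 1 ≤ ‖z n‖) :
    ∃ u ∈ directionsAtInfinity l D, ∃ φ : ℕ → ℕ, StrictMono φ ∧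
      Tendsto (fun n => ‖z (φ n)‖⁻¹ • z (φ n)) atTop (nhds u) := by
  have hz0 : ∀ n, (0:ℝ) < ‖z n‖ := by
    intro n
    have := hnorm n
    have h1 : (0:ℝ) < (n:ℝ) + 1 := by positivity
    linarith
  have hw : ∀ n, ‖z n‖⁻¹ • z n ∈ sphere (0 : EuclideanSpace ℝ (Fin l)) 1 := by
    intro n
    rw [mem_sphere_zero_iff_norm, norm_smul, Real.norm_eq_abs, abs_of_pos (inv_pos.mpr (hz0 n))]
    exact inv_mul_cancel₀ (ne_of_gt (hz0 n))
  obtain ⟨u, hu_s, φ, hφ, hconv_w⟩ := (isCompact_sphere (0 : EuclideanSpace ℝ (Fin l)) 1).tendsto_subseq hw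
  have hnu : ‖u‖ = 1 := mem_sphere_zero_iff_norm.mp hu_s
  have hinf : Tendsto (fun n => ‖z (φ n)‖) atTop atTop := by
    apply tendsto_atTop_mono (f := fun n : ℕ => (n:ℝ) + 1)
    · intro n
      exact le_trans (by exact_mod_cast add_le_add_left (Nat.cast_le.mpr hφ.le_apply) 1) (hnorm (φ n))
    · exact tendsto_atTop_add_const_right _ _ tendsto_natCast_atTop_atTop
  have hcl : ∀ t : ℝ, 0 ≤ t → x₀ + t • u ∈ closure D := by
    intro t ht
    have hmem : ∀ᶠ n in atTop, x₀ + (t * ‖z (φ n)‖⁻¹) • (z (φ n) - x₀) ∈ D := by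
      filter_upwards [hinf.eventually_ge_atTop t] with n hn
      set s := t * ‖z (φ n)‖⁻¹ with hs
      have hs0 : 0 ≤ s := by positivity
      have hs1 : s ≤ 1 := by
        rw [hs]
        rw [mul_inv_le_iff₀ (hz0 _), one_mul]
        exact hn
      have := hconv hx₀ (hz (φ n)) (a := 1 - s) (b := s) (by linarith) hs0 (by ring)
      convert this using 1
      module
    have htend : Tendsto (fun n => x₀ + (t * ‖z (φ n)‖⁻¹) • (z (φ n) - x₀)) atTop
        (nhds (x₀ + t • u)) := by
      have heq : ∀ n, x₀ + (t * ‖z (φ n)‖⁻¹) • (z (φ n) - x₀)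
          = (x₀ + t • (‖z (φ n)‖⁻¹ • z (φ n))) - (t * ‖z (φ n)‖⁻¹) • x₀ := by
        intro n
        rw [mul_smul, mul_smul]
        module
      rw [funext heq]
      have h1 : Tendsto (fun n => x₀ + t • (‖z (φ n)‖⁻¹ • z (φ n))) atTop
          (nhds (x₀ + t • u)) := (hconv_w.const_smul t).const_add x₀
      have h2 : Tendsto (fun n => (t * ‖z (φ n)‖⁻¹) • x₀) atTop
          (nhds (0 : EuclideanSpace ℝ (Fin l))) := by
        have := (hinf.inv_tendsto_atTop.const_mul t).smul_const x₀
        simpa using this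
      simpa using h1.sub h2
    exact mem_closure_of_tendsto htend hmem
  refine ⟨u, ⟨hnu, x₀, hx₀, fun t ht => aux_ray_mem hopen hconv hx₀ hcl ht⟩, φ, hφ, hconv_w⟩

/-- Two points in a preconnected subset of `S` have the same connected component in `S`. -/
private lemma conn_eq {S K : Set (EuclideanSpace ℝ (Fin l))} (hKS : K ⊆ S)
    (hK : IsPreconnected K) {p q : EuclideanSpace ℝ (Fin l)} (hp : p ∈ K) (hq : q ∈ K) :
    connectedComponentIn S p = connectedComponentIn S q :=
  connectedComponentIn_eq (hK.subset_connectedComponentIn hp hKS hq)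

private lemma contRay (x₀ u : EuclideanSpace ℝ (Fin l)) :
    Continuous (fun t : ℝ => x₀ + t • u) :=
  continuous_const.add (continuous_id.smul continuous_const)

private lemma notBall {R : ℝ} {x : EuclideanSpace ℝ (Fin l)} (h : R < ‖x‖) :
    x ∉ closedBall (0 : EuclideanSpace ℝ (Fin l)) R := by
  rw [mem_closedBall_zero_iff]; exact not_le.mpr h

/-- A far piece of a ray in direction `u ∈ S_∞` lies in `D \ closedBall 0 R`. -/
private lemma ray_piece_sub (hopen : IsOpen D) (hconv : Convex ℝ D) {R : ℝ}
    {u : EuclideanSpace ℝ (Fin l)} (hu : u ∈ directionsAtInfinity l D)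
    {x₀ : EuclideanSpace ℝ (Fin l)} (hx₀ : x₀ ∈ D) {t : ℝ} (ht : R + ‖x₀‖ + 1 ≤ t)
    (ht0 : 0 ≤ t) : x₀ + t • u ∈ D \ closedBall 0 R := by
  refine ⟨dir_ray hopen hconv hu hx₀ ht0, notBall ?_⟩
  have := norm_add_smul_ge (c := x₀) hu.1 ht0
  linarith

private lemma cc_ray_shift (hopen : IsOpen D) (hconv : Convex ℝ D) {R : ℝ} (hR : 0 < R)
    {u : EuclideanSpace ℝ (Fin l)} (hu : u ∈ directionsAtInfinity l D)
    {x₀ : EuclideanSpace ℝ (Fin l)} (hx₀ : x₀ ∈ D) {T T' : ℝ}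
    (hT : R + ‖x₀‖ + 1 ≤ T) (hT' : R + ‖x₀‖ + 1 ≤ T') :
    connectedComponentIn (D \ closedBall 0 R) (x₀ + T • u)
      = connectedComponentIn (D \ closedBall 0 R) (x₀ + T' • u) := by
  have hpos : 0 < R + ‖x₀‖ + 1 := by positivity
  apply conn_eq (K := (fun t : ℝ => x₀ + t • u) '' Icc (min T T') (max T T'))
  · rintro p ⟨t, ⟨ht1, _⟩, rfl⟩
    have h1 : R + ‖x₀‖ + 1 ≤ t := le_trans (le_min hT hT') ht1
    exact ray_piece_sub hopen hconv hu hx₀ h1 (by linarith)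
  · exact isPreconnected_Icc.image _ (contRay x₀ u).continuousOn
  · exact ⟨T, ⟨min_le_left _ _, le_max_left _ _⟩, rfl⟩
  · exact ⟨T', ⟨min_le_right _ _, le_max_right _ _⟩, rfl⟩

private lemma cc_join (hopen : IsOpen D) (hconv : Convex ℝ D) {R : ℝ} (hR : 0 < R)
    {u w : EuclideanSpace ℝ (Fin l)} (hu : u ∈ directionsAtInfinity l D)
    (hw : w ∈ directionsAtInfinity l D) (hne : w ≠ -u)
    {x₀ : EuclideanSpace ℝ (Fin l)} (hx₀ : x₀ ∈ D) :
    connectedComponentIn (D \ closedBall 0 R) (x₀ + (R + ‖x₀‖ + 1) • u)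
      = connectedComponentIn (D \ closedBall 0 R) (x₀ + (R + ‖x₀‖ + 1) • w) := by
  by_cases heq : w = u
  · rw [heq]
  -- the inner product is strictly between -1 and 1
  set c : ℝ := ⟪u, w⟫ with hc
  have hu1 : ‖u‖ = 1 := hu.1
  have hw1 : ‖w‖ = 1 := hw.1
  have hc1 : c < 1 := by
    rcases lt_or_eq_of_le (real_inner_le_norm u w) with h | h
    · rw [hu1, hw1] at h; simpa using h
    · exfalso
      have : ⟪u, w⟫ = 1 := by rw [hc] at *; rw [h, hu1, hw1]; norm_num
      exact heq ((inner_eq_one_iff_of_norm_eq_one hu1 hw1).mp this).symm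
  have hc2 : -1 < c := by
    have hw1' : ‖-w‖ = 1 := by rwa [norm_neg]
    rcases lt_or_eq_of_le (real_inner_le_norm u (-w)) with h | h
    · rw [hu1, hw1'] at h
      rw [inner_neg_right] at h
      simpa using by linarith [h]
    · exfalso
      have h1 : ⟪u, -w⟫ = 1 := by rw [h, hu1, hw1']; norm_num
      have h2 := (inner_eq_one_iff_of_norm_eq_one hu1 hw1').mp h1
      exact hne (by rw [h2, neg_neg])
  have habs : |c| < 1 := abs_lt.mpr ⟨hc2, hc1⟩
  set δ : ℝ := Real.sqrt (1 - |c|) with hδ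
  have hδpos : 0 < δ := Real.sqrt_pos.mpr (by linarith)
  have hδsq : δ ^ 2 = 1 - |c| := Real.sq_sqrt (by linarith)
  set T₀ : ℝ := R + ‖x₀‖ + 1 with hT₀
  have hT₀pos : 0 < T₀ := by positivity
  set T : ℝ := max T₀ (T₀ / δ) with hT
  have hTa : T₀ ≤ T := le_max_left _ _
  have hTpos : 0 < T := lt_of_lt_of_le hT₀pos hTa
  have hδT : T₀ ≤ δ * T := by
    have h1 : T₀ / δ ≤ T := le_max_right _ _
    calc T₀ = δ * (T₀ / δ) := by field_simp
    _ ≤ δ * T := by nlinarith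
  -- norm bound for the two bent rays
  have hbound : ∀ p q : EuclideanSpace ℝ (Fin l), ‖p‖ = 1 → ‖q‖ = 1 → ⟪p, q⟫ = c →
      ∀ t : ℝ, 0 ≤ t → t ≤ T → x₀ + T • p + t • q ∈ D → x₀ + T • p + t • q ∈
        D \ closedBall 0 R := by
    intro p q hp1 hq1 hpq t ht0 htT hmem
    refine ⟨hmem, notBall ?_⟩
    have hsq : (δ * T) ^ 2 ≤ ‖T • p + t • q‖ ^ 2 := by
      rw [norm_add_sq_real, real_inner_smul_left, real_inner_smul_right, hpq,
        norm_smul, norm_smul, Real.norm_eq_abs, Real.norm_eq_abs, hp1, hq1,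
        abs_of_nonneg ht0, abs_of_pos hTpos, mul_one, mul_one, mul_pow, hδsq]
      nlinarith [le_abs_self c, neg_abs_le c, sq_nonneg (t - T), sq_nonneg (t + T),
        abs_nonneg c, mul_nonneg ht0 hTpos.le]
    have h2 : δ * T ≤ ‖T • p + t • q‖ :=
      le_of_sq_le_sq' (norm_nonneg _) hsq
    have h3 : ‖T • p + t • q‖ - ‖x₀‖ ≤ ‖x₀ + (T • p + t • q)‖ := by
      have := norm_sub_le (x₀ + (T • p + t • q)) x₀
      simp only [add_sub_cancel_left] at this
      linarith
    have h4 : x₀ + T • p + t • q = x₀ + (T • p + t • q) := by module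
    rw [h4]
    linarith
  -- the two bent rays
  set A := (fun t : ℝ => x₀ + T • u + t • w) '' Icc 0 T with hA
  set B := (fun t : ℝ => x₀ + T • w + t • u) '' Icc 0 T with hB
  have hcsymm : ⟪w, u⟫ = c := real_inner_comm u w ▸ rfl
  have hAsub : A ⊆ D \ closedBall 0 R := by
    rintro p ⟨t, ⟨ht0, htT⟩, rfl⟩
    exact hbound u w hu1 hw1 rfl t ht0 htT
      (dir_ray hopen hconv hw (dir_ray hopen hconv hu hx₀ hTpos.le) ht0)
  have hBsub : B ⊆ D \ closedBall 0 R := by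
    rintro p ⟨t, ⟨ht0, htT⟩, rfl⟩
    exact hbound w u hw1 hu1 hcsymm t ht0 htT
      (dir_ray hopen hconv hu (dir_ray hopen hconv hw hx₀ hTpos.le) ht0)
  have hApc : IsPreconnected A := isPreconnected_Icc.image _
    (contRay (x₀ + T • u) w).continuousOn
  have hBpc : IsPreconnected B := isPreconnected_Icc.image _
    (contRay (x₀ + T • w) u).continuousOn
  have hcommon : x₀ + T • u + T • w ∈ A ∩ B := by
    constructor
    · exact ⟨T, ⟨hTpos.le, le_refl T⟩, rfl⟩
    · exact ⟨T, ⟨hTpos.le, le_refl T⟩, by module⟩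
  have hKpc : IsPreconnected (A ∪ B) := hApc.union _ hcommon.1 hcommon.2 hBpc
  have h1 : connectedComponentIn (D \ closedBall 0 R) (x₀ + T • u)
      = connectedComponentIn (D \ closedBall 0 R) (x₀ + T • w) := by
    apply conn_eq (union_subset hAsub hBsub) hKpc
    · exact Or.inl ⟨0, ⟨le_refl 0, hTpos.le⟩, by simp⟩
    · exact Or.inr ⟨0, ⟨le_refl 0, hTpos.le⟩, by simp⟩
  calc connectedComponentIn (D \ closedBall 0 R) (x₀ + T₀ • u)
      = connectedComponentIn (D \ closedBall 0 R) (x₀ + T • u) :=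
        cc_ray_shift hopen hconv hR hu hx₀ (le_refl _) hTa
    _ = connectedComponentIn (D \ closedBall 0 R) (x₀ + T • w) := h1
    _ = connectedComponentIn (D \ closedBall 0 R) (x₀ + T₀ • w) :=
        cc_ray_shift hopen hconv hR hw hx₀ hTa (le_refl _)

private lemma unbounded_seq {C : Set (EuclideanSpace ℝ (Fin l))} (h : ¬ Bornology.IsBounded C) :
    ∃ z : ℕ → EuclideanSpace ℝ (Fin l), (∀ n, z n ∈ C) ∧ ∀ n : ℕ, (n:ℝ) + 1 ≤ ‖z n‖ := by
  have : ∀ n : ℕ, ∃ x ∈ C, (n:ℝ) + 1 ≤ ‖x‖ := by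
    intro n
    by_contra hcon
    push_neg at hcon
    exact h (isBounded_iff_forall_norm_le.mpr ⟨(n:ℝ) + 1, fun x hx => (hcon x hx).le⟩)
  choose z hz1 hz2 using this
  exact ⟨z, hz1, hz2⟩

private lemma ray_tail_unbounded {x₀ u : EuclideanSpace ℝ (Fin l)} (hu1 : ‖u‖ = 1)
    {T₀ : ℝ} (hT₀ : 0 ≤ T₀) {C : Set (EuclideanSpace ℝ (Fin l))}
    (hsub : ∀ t : ℝ, T₀ ≤ t → x₀ + t • u ∈ C) : ¬ Bornology.IsBounded C := by
  intro hb
  obtain ⟨M, hM⟩ := isBounded_iff_forall_norm_le.mp hb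
  set t := max T₀ (M + ‖x₀‖ + 1) with htdef
  have ht1 : T₀ ≤ t := le_max_left _ _
  have ht2 : M + ‖x₀‖ + 1 ≤ t := le_max_right _ _
  have h1 := hM _ (hsub t ht1)
  have h2 := norm_add_smul_ge (c := x₀) hu1 (le_trans hT₀ ht1)
  linarith

private lemma one_comp (hopen : IsOpen D) (hconv : Convex ℝ D)
    (hunb : ¬ Bornology.IsBounded D)
    (hne : ¬ ∃ v : EuclideanSpace ℝ (Fin l), ‖v‖ = 1 ∧ directionsAtInfinity l D = {v, -v})
    {R : ℝ} (hR : 0 < R) : (unboundedComponents l (D \ closedBall 0 R)).ncard = 1 := by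
  obtain ⟨x₀, hx₀⟩ : D.Nonempty := by
    rcases eq_empty_or_nonempty D with h | h
    · exact absurd (h ▸ Bornology.isBounded_empty) hunb
    · exact h
  set S := D \ closedBall (0 : EuclideanSpace ℝ (Fin l)) R with hSdef
  set T₀ : ℝ := R + ‖x₀‖ + 1 with hT₀def
  have hT₀pos : 0 < T₀ := by positivity
  obtain ⟨zD, hzD, hzDn⟩ := unbounded_seq hunb
  obtain ⟨u₀, hu₀, -⟩ := seq_dir hopen hconv hx₀ zD hzD hzDn
  set p₀ := x₀ + T₀ • u₀ with hp₀def
  have hp₀S : p₀ ∈ S := ray_piece_sub hopen hconv hu₀ hx₀ (le_refl _) hT₀pos.le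
  set C₀ := connectedComponentIn S p₀ with hC₀def
  have key : ∀ a b : EuclideanSpace ℝ (Fin l), a ∈ directionsAtInfinity l D →
      b ∈ directionsAtInfinity l D → b ≠ -a →
      connectedComponentIn S (x₀ + T₀ • a) = connectedComponentIn S (x₀ + T₀ • b) := by
    intro a b ha hb hab
    rw [hSdef, hT₀def]
    exact cc_join hopen hconv hR ha hb hab hx₀
  have hPt : ∀ u ∈ directionsAtInfinity l D,
      connectedComponentIn S (x₀ + T₀ • u) = C₀ := by
    intro u hu
    rw [hC₀def, hp₀def]
    by_cases h2 : u₀ = -u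
    · have hu_eq : u = -u₀ := by rw [h2, neg_neg]
      obtain ⟨c, hc, hc1, hc2⟩ : ∃ c ∈ directionsAtInfinity l D, c ≠ u₀ ∧ c ≠ -u₀ := by
        by_contra hcon
        push_neg at hcon
        refine hne ⟨u₀, hu₀.1, Subset.antisymm ?_ ?_⟩
        · intro c hcmem
          rcases eq_or_ne c u₀ with h | h
          · exact Or.inl h
          · exact Or.inr (hcon c hcmem h)
        · intro c hcmem
          rcases hcmem with h | h
          · exact h ▸ hu₀
          · rw [mem_singleton_iff] at h
            rw [h, ← hu_eq]
            exact hu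
      have e1 := key u c hu hc (by rw [hu_eq, neg_neg]; exact hc1)
      have e2 := key c u₀ hc hu₀ (fun hh => hc2 (by rw [hh, neg_neg]))
      exact e1.trans e2
    · exact key u u₀ hu hu₀ h2
  -- the set of unbounded components is {C₀}
  have hset : unboundedComponents l S = {C₀} := by
    apply Subset.antisymm
    · rintro C ⟨⟨x, hxS, rfl⟩, hCunb⟩
      obtain ⟨z, hzC, hzn⟩ := unbounded_seq hCunb
      have hzD' : ∀ n, z n ∈ D := fun n => ((connectedComponentIn_subset S x) (hzC n)).1
      obtain ⟨u, hu, φ, hφ, hw⟩ := seq_dir hopen hconv hx₀ z hzD' hzn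
      -- find an index with positive inner product with u
      have htend : Tendsto (fun n => ⟪‖z (φ n)‖⁻¹ • z (φ n), u⟫) atTop (nhds 1) := by
        have := hw.inner tendsto_const_nhds (𝕜 := ℝ) (g := fun _ : ℕ => u)
        rwa [real_inner_self_eq_norm_sq, hu.1, one_pow] at this
      obtain ⟨n, hn⟩ := (htend.eventually (eventually_gt_nhds (by norm_num : (0:ℝ) < 1))).exists
      set z' := z (φ n) with hz'def
      have hz'pos : (0:ℝ) < ‖z'‖ := by
        have h0 := hzn (φ n)
        have h1 : (0:ℝ) < (φ n : ℝ) + 1 := by positivity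
        linarith
      have hz'inner : 0 ≤ ⟪z', u⟫ := by
        have heq : z' = ‖z'‖ • (‖z'‖⁻¹ • z') := by
          rw [smul_smul, mul_inv_cancel₀ (ne_of_gt hz'pos), one_smul]
        rw [heq, real_inner_smul_left]
        positivity
      have hz'S : z' ∈ S := connectedComponentIn_subset S x (hzC (φ n))
      have hz'D : z' ∈ D := hz'S.1
      have hz'norm : R < ‖z'‖ := by
        have := hz'S.2
        rwa [mem_closedBall_zero_iff, not_le] at this
      -- connect z' to x₀ + T₀ • u
      set T₁ : ℝ := R + ‖z'‖ + 2 * ‖x₀‖ + 1 with hT₁def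
      have hT₁pos : 0 < T₁ := by positivity
      have hT₀T₁ : T₀ ≤ T₁ := by
        rw [hT₀def, hT₁def]; have := norm_nonneg x₀; have := hz'norm; nlinarith [norm_nonneg x₀, hR]
      set K₁ := (fun t : ℝ => z' + t • u) '' Icc 0 T₁ with hK₁def
      set K₂ := (fun s : ℝ => x₀ + s • (z' - x₀) + T₁ • u) '' Icc 0 1 with hK₂def
      set K₃ := (fun t : ℝ => x₀ + t • u) '' Icc T₀ T₁ with hK₃def
      have hK₁sub : K₁ ⊆ S := by
        rintro p ⟨t, ⟨ht0, htT⟩, rfl⟩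
        refine ⟨dir_ray hopen hconv hu hz'D ht0, notBall ?_⟩
        have := norm_ray_ge hu.1 hz'inner ht0
        linarith
      have hK₂sub : K₂ ⊆ S := by
        rintro p ⟨s, ⟨hs0, hs1⟩, rfl⟩
        have hmemD : x₀ + s • (z' - x₀) ∈ D := by
          have := hconv hx₀ hz'D (a := 1 - s) (b := s) (by linarith) hs0 (by ring)
          convert this using 1
          module
        refine ⟨dir_ray hopen hconv hu hmemD hT₁pos.le, notBall ?_⟩
        have hb1 : ‖x₀ + s • (z' - x₀)‖ ≤ ‖x₀‖ + (‖z'‖ + ‖x₀‖) := by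
          calc ‖x₀ + s • (z' - x₀)‖ ≤ ‖x₀‖ + ‖s • (z' - x₀)‖ := norm_add_le _ _
            _ = ‖x₀‖ + s * ‖z' - x₀‖ := by
                rw [norm_smul, Real.norm_eq_abs, abs_of_nonneg hs0]
            _ ≤ ‖x₀‖ + 1 * (‖z'‖ + ‖x₀‖) := by
                have := norm_sub_le z' x₀
                have hnn : (0:ℝ) ≤ ‖z' - x₀‖ := norm_nonneg _
                nlinarith
            _ = ‖x₀‖ + (‖z'‖ + ‖x₀‖) := by ring
        have := norm_add_smul_ge (c := x₀ + s • (z' - x₀)) hu.1 hT₁pos.le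
        rw [hT₁def] at this ⊢
        linarith
      have hK₃sub : K₃ ⊆ S := by
        rintro p ⟨t, ⟨ht1, ht2⟩, rfl⟩
        exact ray_piece_sub hopen hconv hu hx₀ ht1 (le_trans hT₀pos.le ht1)
      have hK₁pc : IsPreconnected K₁ := isPreconnected_Icc.image _ (contRay z' u).continuousOn
      have hK₂pc : IsPreconnected K₂ := by
        apply isPreconnected_Icc.image
        exact ((continuous_const.add (continuous_id.smul continuous_const)).add
          continuous_const).continuousOn
      have hK₃pc : IsPreconnected K₃ := isPreconnected_Icc.image _ (contRay x₀ u).continuousOn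
      have hc12 : z' + T₁ • u ∈ K₁ ∩ K₂ := by
        constructor
        · exact ⟨T₁, ⟨hT₁pos.le, le_refl _⟩, rfl⟩
        · exact ⟨1, ⟨zero_le_one, le_refl _⟩, by module⟩
      have hc23 : x₀ + T₁ • u ∈ K₂ ∩ K₃ := by
        constructor
        · exact ⟨0, ⟨le_refl _, zero_le_one⟩, by module⟩
        · exact ⟨T₁, ⟨hT₀T₁, le_refl _⟩, rfl⟩
      have hKpc : IsPreconnected ((K₁ ∪ K₂) ∪ K₃) := by
        apply IsPreconnected.union (x₀ + T₁ • u)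
        · exact Or.inr hc23.1
        · exact hc23.2
        · exact hK₁pc.union _ hc12.1 hc12.2 hK₂pc
        · exact hK₃pc
      have hKsub : (K₁ ∪ K₂) ∪ K₃ ⊆ S :=
        union_subset (union_subset hK₁sub hK₂sub) hK₃sub
      have hz'K : z' ∈ (K₁ ∪ K₂) ∪ K₃ :=
        Or.inl (Or.inl ⟨0, ⟨le_refl _, hT₁pos.le⟩, by simp⟩)
      have hpK : x₀ + T₀ • u ∈ (K₁ ∪ K₂) ∪ K₃ :=
        Or.inr ⟨T₀, ⟨le_refl _, hT₀T₁⟩, rfl⟩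
      have e1 : connectedComponentIn S x = connectedComponentIn S z' :=
        connectedComponentIn_eq (hzC (φ n))
      have e2 : connectedComponentIn S z' = connectedComponentIn S (x₀ + T₀ • u) :=
        conn_eq hKsub hKpc hz'K hpK
      rw [mem_singleton_iff, e1, e2]
      exact hPt u hu
    · intro C hC
      rw [mem_singleton_iff] at hC
      subst hC
      constructor
      · exact ⟨p₀, hp₀S, hC₀def⟩
      · apply ray_tail_unbounded hu₀.1 hT₀pos.le (x₀ := x₀)
        intro t ht
        have hmem : x₀ + t • u₀ ∈ S :=
          ray_piece_sub hopen hconv hu₀ hx₀ ht (le_trans hT₀pos.le ht)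
        have hKtail : (fun t : ℝ => x₀ + t • u₀) '' Ici T₀ ⊆ connectedComponentIn S p₀ := by
          apply IsPreconnected.subset_connectedComponentIn
          · exact isPreconnected_Ici.image _ (contRay x₀ u₀).continuousOn
          · exact ⟨T₀, mem_Ici.mpr le_rfl, rfl⟩
          · rintro p ⟨t', ht', rfl⟩
            exact ray_piece_sub hopen hconv hu₀ hx₀ ht' (le_trans hT₀pos.le ht')
        exact hKtail ⟨t, mem_Ici.mpr ht, rfl⟩
  rw [hset]
  exact Set.ncard_singleton _

private lemma inner_ray (x v' : EuclideanSpace ℝ (Fin l)) (hv'1 : ‖v'‖ = 1) (t : ℝ) :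
    ⟪x + t • v', v'⟫ = ⟪x, v'⟫ + t := by
  rw [inner_add_left, real_inner_smul_left, real_inner_self_eq_norm_sq, hv'1]
  ring

private lemma sector_preconnected (hopen : IsOpen D) (hconv : Convex ℝ D) {R : ℝ}
    {v' : EuclideanSpace ℝ (Fin l)} (hv' : v' ∈ directionsAtInfinity l D) :
    IsPreconnected {x : EuclideanSpace ℝ (Fin l) | x ∈ D ∧ R < ‖x‖ ∧ 0 < ⟪x, v'⟫} := by
  have hv'1 : ‖v'‖ = 1 := hv'.1
  apply isPreconnected_of_forall_pair
  rintro x ⟨hxD, hxR, hxv⟩ y ⟨hyD, hyR, hyv⟩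
  set T : ℝ := max R 0 + 1 with hTdef
  have hTR : R < T := lt_of_le_of_lt (le_max_left R 0) (by rw [hTdef]; linarith [le_max_left R 0])
  have hT0 : 0 < T := lt_of_le_of_lt (le_max_right R 0) (by rw [hTdef]; linarith [le_max_right R 0])
  set K₁ := (fun t : ℝ => x + t • v') '' Icc 0 T with hK₁def
  set K₂ := (fun s : ℝ => x + s • (y - x) + T • v') '' Icc 0 1 with hK₂def
  set K₃ := (fun t : ℝ => y + t • v') '' Icc 0 T with hK₃def
  refine ⟨(K₁ ∪ K₂) ∪ K₃, ?_, ?_, ?_, ?_⟩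
  · apply union_subset (union_subset ?_ ?_) ?_
    · rintro p ⟨t, ⟨ht0, _⟩, rfl⟩
      refine ⟨dir_ray hopen hconv hv' hxD ht0, ?_, ?_⟩
      · exact lt_of_lt_of_le hxR (norm_ray_ge hv'1 hxv.le ht0)
      · rw [inner_ray _ _ hv'1]; linarith
    · rintro p ⟨s, ⟨hs0, hs1⟩, rfl⟩
      have hmemD : x + s • (y - x) ∈ D := by
        have := hconv hxD hyD (a := 1 - s) (b := s) (by linarith) hs0 (by ring)
        convert this using 1
        module
      have hinner : ⟪x + s • (y - x) + T • v', v'⟫ = (1 - s) * ⟪x, v'⟫ + s * ⟪y, v'⟫ + T := by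
        rw [inner_ray _ _ hv'1, inner_add_left, real_inner_smul_left, inner_sub_left]
        ring
      have hpos : 0 < (1 - s) * ⟪x, v'⟫ + s * ⟪y, v'⟫ + T := by nlinarith
      refine ⟨dir_ray hopen hconv hv' hmemD hT0.le, ?_, ?_⟩
      · have h1 : ⟪x + s • (y - x) + T • v', v'⟫ ≤ ‖x + s • (y - x) + T • v'‖ := by
          have := real_inner_le_norm (x + s • (y - x) + T • v') v'
          rwa [hv'1, mul_one] at this
        rw [hinner] at h1
        nlinarith
      · rw [hinner]; exact hpos
    · rintro p ⟨t, ⟨ht0, _⟩, rfl⟩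
      refine ⟨dir_ray hopen hconv hv' hyD ht0, ?_, ?_⟩
      · exact lt_of_lt_of_le hyR (norm_ray_ge hv'1 hyv.le ht0)
      · rw [inner_ray _ _ hv'1]; linarith
  · exact Or.inl (Or.inl ⟨0, ⟨le_refl _, hT0.le⟩, by simp⟩)
  · exact Or.inr ⟨0, ⟨le_refl _, hT0.le⟩, by simp⟩
  · have hK₁pc : IsPreconnected K₁ := isPreconnected_Icc.image _ (contRay x v').continuousOn
    have hK₂pc : IsPreconnected K₂ := isPreconnected_Icc.image _
      ((continuous_const.add (continuous_id.smul continuous_const)).add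
        continuous_const).continuousOn
    have hK₃pc : IsPreconnected K₃ := isPreconnected_Icc.image _ (contRay y v').continuousOn
    have hc12 : x + T • v' ∈ K₁ ∩ K₂ := by
      constructor
      · exact ⟨T, ⟨hT0.le, le_refl _⟩, rfl⟩
      · exact ⟨0, ⟨le_refl _, zero_le_one⟩, by module⟩
    have hc23 : y + T • v' ∈ K₂ ∩ K₃ := by
      constructor
      · exact ⟨1, ⟨zero_le_one, le_refl _⟩, by module⟩
      · exact ⟨T, ⟨hT0.le, le_refl _⟩, rfl⟩
    apply IsPreconnected.union (y + T • v')
    · exact Or.inr hc23.1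
    · exact hc23.2
    · exact hK₁pc.union _ hc12.1 hc12.2 hK₂pc
    · exact hK₃pc

private lemma two_comp (hopen : IsOpen D) (hconv : Convex ℝ D)
    (hunb : ¬ Bornology.IsBounded D) {v : EuclideanSpace ℝ (Fin l)} (hv1 : ‖v‖ = 1)
    (hS : directionsAtInfinity l D = {v, -v}) :
    ∃ R₀ : ℝ, 0 < R₀ ∧ ∀ R : ℝ, R₀ ≤ R →
      (unboundedComponents l (D \ closedBall 0 R)).ncard = 2 := by
  obtain ⟨x₀, hx₀⟩ : D.Nonempty := by
    rcases eq_empty_or_nonempty D with h | h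
    · exact absurd (h ▸ Bornology.isBounded_empty) hunb
    · exact h
  have hvmem : v ∈ directionsAtInfinity l D := by rw [hS]; exact mem_insert _ _
  have hvneg : -v ∈ directionsAtInfinity l D := by rw [hS]; exact mem_insert_of_mem _ rfl
  have hvneg1 : ‖-v‖ = 1 := by rwa [norm_neg]
  have hline : ∀ x ∈ D, ∀ t : ℝ, x + t • v ∈ D := by
    intro x hx t
    rcases le_or_gt 0 t with ht | ht
    · exact dir_ray hopen hconv hvmem hx ht
    · have heq : x + t • v = x + (-t) • (-v) := by module
      rw [heq]
      exact dir_ray hopen hconv hvneg hx (by linarith)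
  -- the projection of D on the orthogonal complement of v is bounded
  obtain ⟨M, hM0, hMb⟩ : ∃ M : ℝ, 0 ≤ M ∧ ∀ x ∈ D, ‖x - ⟪x, v⟫ • v‖ ≤ M := by
    by_contra hcon
    push_neg at hcon
    have hseq : ∀ n : ℕ, ∃ x ∈ D, (n:ℝ) + 1 ≤ ‖x - ⟪x, v⟫ • v‖ := by
      intro n
      obtain ⟨x, hx, h⟩ := hcon ((n:ℝ) + 1) (by positivity)
      exact ⟨x, hx, h.le⟩
    choose x hxD hxn using hseq
    set y : ℕ → EuclideanSpace ℝ (Fin l) := fun n => x n - ⟪x n, v⟫ • v with hydef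
    have hyD : ∀ n, y n ∈ D := by
      intro n
      have := hline (x n) (hxD n) (-⟪x n, v⟫)
      have heq : x n + (-⟪x n, v⟫) • v = y n := by rw [hydef]; module
      rwa [heq] at this
    have hyv : ∀ n, ⟪y n, v⟫ = 0 := by
      intro n
      rw [hydef]
      simp only [inner_sub_left, real_inner_smul_left, real_inner_self_eq_norm_sq, hv1]
      ring
    obtain ⟨u, hu, φ, hφ, hw⟩ := seq_dir hopen hconv hx₀ y hyD hxn
    have h0 : Tendsto (fun n => ⟪‖y (φ n)‖⁻¹ • y (φ n), v⟫) atTop (nhds ⟪u, v⟫) :=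
      hw.inner tendsto_const_nhds
    have hzero : (fun n => ⟪‖y (φ n)‖⁻¹ • y (φ n), v⟫) = fun _ : ℕ => (0:ℝ) := by
      funext n
      rw [real_inner_smul_left, hyv, mul_zero]
    have huv : ⟪u, v⟫ = 0 := by
      apply tendsto_nhds_unique h0
      rw [hzero]
      exact tendsto_const_nhds
    rw [hS] at hu
    rcases hu with h | h
    · rw [h, real_inner_self_eq_norm_sq, hv1] at huv; norm_num at huv
    · rw [mem_singleton_iff] at h
      rw [h, inner_neg_left, real_inner_self_eq_norm_sq, hv1] at huv
      norm_num at huv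
  refine ⟨M + 1, by positivity, ?_⟩
  intro R hMR
  have hR : 0 < R := lt_of_lt_of_le (by positivity) hMR
  set S := D \ closedBall (0 : EuclideanSpace ℝ (Fin l)) R with hSdef
  have hSx : ∀ x ∈ S, x ∈ D ∧ R < ‖x‖ := by
    intro x hx
    refine ⟨hx.1, ?_⟩
    have := hx.2
    rwa [mem_closedBall_zero_iff, not_le] at this
  have key : ∀ x ∈ S, ⟪x, v⟫ ≠ 0 := by
    intro x hx h0
    obtain ⟨hxD, hxR⟩ := hSx x hx
    have : ‖x - ⟪x, v⟫ • v‖ ≤ M := hMb x hxD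
    rw [h0] at this
    simp only [zero_smul, sub_zero] at this
    linarith
  set Dp := {x : EuclideanSpace ℝ (Fin l) | x ∈ D ∧ R < ‖x‖ ∧ 0 < ⟪x, v⟫} with hDpdef
  set Dm := {x : EuclideanSpace ℝ (Fin l) | x ∈ D ∧ R < ‖x‖ ∧ 0 < ⟪x, -v⟫} with hDmdef
  have hunion : S = Dp ∪ Dm := by
    apply Subset.antisymm
    · intro x hx
      obtain ⟨hxD, hxR⟩ := hSx x hx
      rcases lt_or_gt_of_ne (key x hx) with h | h
      · right
        exact ⟨hxD, hxR, by rw [inner_neg_right]; linarith⟩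
      · left
        exact ⟨hxD, hxR, h⟩
    · rintro x (⟨hxD, hxR, _⟩ | ⟨hxD, hxR, _⟩) <;>
        exact ⟨hxD, by rwa [mem_closedBall_zero_iff, not_le]⟩
  have hdisj : Disjoint Dp Dm := by
    rw [disjoint_left]
    rintro x ⟨_, _, h1⟩ ⟨_, _, h2⟩
    rw [inner_neg_right] at h2
    linarith
  have hDpopen : IsOpen Dp := by
    have : Dp = D ∩ ({x : EuclideanSpace ℝ (Fin l) | R < ‖x‖} ∩
        {x : EuclideanSpace ℝ (Fin l) | 0 < ⟪x, v⟫}) := by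
      rfl
    rw [this]
    exact hopen.inter ((isOpen_lt continuous_const continuous_norm).inter
      (isOpen_lt continuous_const (continuous_id.inner continuous_const)))
  have hDmopen : IsOpen Dm := by
    have : Dm = D ∩ ({x : EuclideanSpace ℝ (Fin l) | R < ‖x‖} ∩
        {x : EuclideanSpace ℝ (Fin l) | 0 < ⟪x, -v⟫}) := by
      rfl
    rw [this]
    exact hopen.inter ((isOpen_lt continuous_const continuous_norm).inter
      (isOpen_lt continuous_const (continuous_id.inner continuous_const)))
  have hDppc : IsPreconnected Dp := sector_preconnected hopen hconv hvmem
  have hDmpc : IsPreconnected Dm := sector_preconnected hopen hconv hvneg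
  -- base points
  set t₀ : ℝ := |⟪x₀, v⟫| + R + 1 with ht₀def
  set xp := x₀ + t₀ • v with hxpdef
  set xm := x₀ + t₀ • (-v) with hxmdef
  have hxpinner : R + 1 ≤ ⟪xp, v⟫ := by
    rw [hxpdef, inner_ray _ _ hv1, ht₀def]
    have := neg_abs_le ⟪x₀, v⟫
    linarith
  have hxminner : R + 1 ≤ ⟪xm, -v⟫ := by
    rw [hxmdef, inner_ray _ _ hvneg1, ht₀def, inner_neg_right]
    have := le_abs_self ⟪x₀, v⟫
    linarith
  have hinner_le_norm : ∀ (z w' : EuclideanSpace ℝ (Fin l)), ‖w'‖ = 1 → ⟪z, w'⟫ ≤ ‖z‖ := by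
    intro z w' hw'
    have := real_inner_le_norm z w'
    rwa [hw', mul_one] at this
  have hxp : xp ∈ Dp := by
    refine ⟨hline x₀ hx₀ t₀, ?_, by linarith⟩
    have := hinner_le_norm xp v hv1
    linarith
  have hxm : xm ∈ Dm := by
    refine ⟨by rw [hxmdef]; exact dir_ray hopen hconv hvneg hx₀ (by rw [ht₀def]; positivity), ?_, by linarith⟩
    have := hinner_le_norm xm (-v) hvneg1
    linarith
  have hDpS : Dp ⊆ S := hunion ▸ subset_union_left
  have hDmS : Dm ⊆ S := hunion ▸ subset_union_right
  -- components
  have hccp : ∀ x ∈ Dp, connectedComponentIn S x = Dp := by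
    intro x hx
    apply Subset.antisymm
    · apply IsPreconnected.subset_left_of_subset_union hDpopen hDmopen hdisj
      · rw [← hunion]; exact connectedComponentIn_subset S x
      · exact ⟨x, mem_connectedComponentIn (hDpS hx), hx⟩
      · exact isPreconnected_connectedComponentIn
    · exact hDppc.subset_connectedComponentIn hx hDpS
  have hccm : ∀ x ∈ Dm, connectedComponentIn S x = Dm := by
    intro x hx
    apply Subset.antisymm
    · apply IsPreconnected.subset_left_of_subset_union hDmopen hDpopen hdisj.symm
      · exact (connectedComponentIn_subset S x).trans
          (by rw [hunion]; exact union_subset subset_union_right subset_union_left)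
      · exact ⟨x, mem_connectedComponentIn (hDmS hx), hx⟩
      · exact isPreconnected_connectedComponentIn
    · exact hDmpc.subset_connectedComponentIn hx hDmS
  have hset : unboundedComponents l S = {Dp, Dm} := by
    apply Subset.antisymm
    · rintro C ⟨⟨x, hxS, rfl⟩, _⟩
      rcases (hunion ▸ hxS : x ∈ Dp ∪ Dm) with h | h
      · exact Or.inl (hccp x h)
      · exact Or.inr (hccm x h)
    · rintro C (rfl | rfl)
      · refine ⟨⟨xp, hDpS hxp, (hccp xp hxp).symm⟩, ?_⟩
        apply ray_tail_unbounded hv1 (le_refl (0:ℝ)) (x₀ := xp)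
        intro t ht
        refine ⟨hline xp hxp.1 t, ?_, ?_⟩
        · have h1 : ⟪xp + t • v, v⟫ = ⟪xp, v⟫ + t := inner_ray _ _ hv1 t
          have h2 := hinner_le_norm (xp + t • v) v hv1
          linarith
        · rw [inner_ray _ _ hv1]; linarith
      · refine ⟨⟨xm, hDmS hxm, (hccm xm hxm).symm⟩, ?_⟩
        apply ray_tail_unbounded hvneg1 (le_refl (0:ℝ)) (x₀ := xm)
        intro t ht
        refine ⟨dir_ray hopen hconv hvneg hxm.1 ht, ?_, ?_⟩
        · have h2 := hinner_le_norm (xm + t • (-v)) (-v) hvneg1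
          rw [inner_ray _ _ hvneg1] at h2
          linarith
        · rw [inner_ray _ _ hvneg1]; linarith
  have hneq : Dp ≠ Dm := by
    intro h
    have := hxp
    rw [h] at this
    obtain ⟨_, _, h2⟩ := this
    rw [inner_neg_right] at h2
    linarith
  rw [hset]
  exact Set.ncard_pair hneq

end AuxPriv

/-- For an unbounded open convex set `D ⊆ ℝ^l`, exactly one of the following
holds: (1) for every `R > 0` the set `D \ closedBall 0 R` has exactly one unbounded connected
component; (2) there is `R₀ > 0` such that for every `R ≥ R₀` the set `D \ closedBall 0 R` has
exactly two unbounded connected components.  Moreover (2) holds iff `S_∞(D) = {v, -v}` for some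
unit vector `v`. -/
theorem one_or_two_unbounded_components (l : ℕ) (hl : 1 ≤ l)
    (D : Set (EuclideanSpace ℝ (Fin l))) (hD_open : IsOpen D) (hD_conv : Convex ℝ D)
    (hD_unb : ¬ Bornology.IsBounded D) :
    Xor'
      (∀ R : ℝ, 0 < R →
        (unboundedComponents l (D \ closedBall 0 R)).ncard = 1)
      (∃ R₀ : ℝ, 0 < R₀ ∧ ∀ R : ℝ, R₀ ≤ R →
        (unboundedComponents l (D \ closedBall 0 R)).ncard = 2)
    ∧
    ((∃ R₀ : ℝ, 0 < R₀ ∧ ∀ R : ℝ, R₀ ≤ R →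
        (unboundedComponents l (D \ closedBall 0 R)).ncard = 2)
      ↔ ∃ v : EuclideanSpace ℝ (Fin l), ‖v‖ = 1 ∧
          directionsAtInfinity l D = {v, -v}) := by
  by_cases h : ∃ v : EuclideanSpace ℝ (Fin l), ‖v‖ = 1 ∧ directionsAtInfinity l D = {v, -v}
  · obtain ⟨v, hv1, hS⟩ := h
    obtain ⟨R₀, hR₀, h2⟩ := two_comp hD_open hD_conv hD_unb hv1 hS
    constructor
    · right
      refine ⟨⟨R₀, hR₀, h2⟩, ?_⟩
      intro h1
      have a := h1 R₀ hR₀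
      have b := h2 R₀ (le_refl _)
      omega
    · exact iff_of_true ⟨R₀, hR₀, h2⟩ ⟨v, hv1, hS⟩
  · have h1 : ∀ R : ℝ, 0 < R → (unboundedComponents l (D \ closedBall 0 R)).ncard = 1 :=
      fun R hR => one_comp hD_open hD_conv hD_unb h hR
    have hn2 : ¬ ∃ R₀ : ℝ, 0 < R₀ ∧ ∀ R : ℝ, R₀ ≤ R →
        (unboundedComponents l (D \ closedBall 0 R)).ncard = 2 := by
      rintro ⟨R₀, hR₀, h2⟩
      have a := h1 R₀ hR₀
      have b := h2 R₀ (le_refl _)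
      omega
    exact ⟨Or.inl ⟨h1, hn2⟩, iff_of_false hn2 h⟩
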